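/- Let Ω, Ω̃ ⊆ ℝ² be open sets, φ : Ω → Ω̃ a C¹ diffeomorphism with everywhere positive Jacobian determinant, and A : Ω → (real symmetric 2×2 matrices) agreed with φ. Let r ≥ 2 and suppose C > 0 is such that for every continuously differentiable g : ℝ² → ℝ with compact support in Ω̃, (∫_{Ω̃} |g(w)|^r dw)^{1/r} ≤ C (∫_{Ω̃} |∇g(w)|² dw)^{1/2}. Then for every continuously differentiable f : ℝ² → ℝ with compact support in Ω, the weighted Sobolev–Poincaré inequality (∫_Ω |f(z)|^r · det Dφ(z) dz)^{1/r} ≤ C (∫_Ω ⟨A(z)∇f(z), ∇f(z)⟩ dz)^{1/2} holds. -/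

import Mathlib

open MeasureTheory Set Matrix

noncomputable section

lemma det_toECLM (M : Matrix (Fin 2) (Fin 2) ℝ) :
    ContinuousLinearMap.det (Matrix.toEuclideanCLM (𝕜 := ℝ) M) = M.det := by
  have h : (Matrix.toEuclideanCLM (𝕜 := ℝ) M : EuclideanSpace ℝ (Fin 2) →ₗ[ℝ] EuclideanSpace ℝ (Fin 2))
      = ((WithLp.linearEquiv 2 ℝ (Fin 2 → ℝ)).symm).conj (Matrix.toLin' M) := by
    ext x; rfl
  rw [ContinuousLinearMap.det, h, LinearEquiv.conj_apply, LinearMap.comp_assoc,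
    LinearMap.det_conj, LinearMap.det_toLin']

lemma adj_toECLM (M : Matrix (Fin 2) (Fin 2) ℝ) :
    Matrix.toEuclideanCLM (𝕜 := ℝ) Mᵀ = ContinuousLinearMap.adjoint (Matrix.toEuclideanCLM (𝕜 := ℝ) M) := by
  rw [← ContinuousLinearMap.star_eq_adjoint, ← map_star]
  congr 1

lemma inner_toECLM (M : Matrix (Fin 2) (Fin 2) ℝ) (x y : EuclideanSpace ℝ (Fin 2)) :
    (inner ℝ (Matrix.toEuclideanCLM (𝕜 := ℝ) M x) y : ℝ) = inner ℝ x (Matrix.toEuclideanCLM (𝕜 := ℝ) Mᵀ y) := by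
  rw [adj_toECLM, ContinuousLinearMap.adjoint_inner_right]

lemma inner_gradient (f : EuclideanSpace ℝ (Fin 2) → ℝ) (x v : EuclideanSpace ℝ (Fin 2)) :
    (inner ℝ (gradient f x) v : ℝ) = fderiv ℝ f x v := by
  rw [gradient, InnerProductSpace.toDual_symm_apply]


/-- transfer of the Sobolev–Poincaré inequality: if the constant `C` works for
the non-weighted inequality on `Ω̃`, then the weighted inequality with weight `det Dφ` and the
energy `∫⟨A∇f,∇f⟩` holds on `Ω` with the same constant. -/
theorem stmt5 (Ω Ω' : Set (EuclideanSpace ℝ (Fin 2))) (hΩ : IsOpen Ω) (hΩ' : IsOpen Ω')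
    (φ ψ : EuclideanSpace ℝ (Fin 2) → EuclideanSpace ℝ (Fin 2))
    (hbij : Set.BijOn φ Ω Ω') (hinv : ∀ z ∈ Ω, ψ (φ z) = z)
    (hφ : ContDiffOn ℝ 1 φ Ω) (hψ : ContDiffOn ℝ 1 ψ Ω')
    (J : EuclideanSpace ℝ (Fin 2) → Matrix (Fin 2) (Fin 2) ℝ)
    (hJ : ∀ z ∈ Ω, HasFDerivAt φ (Matrix.toEuclideanCLM (𝕜 := ℝ) (J z)) z)
    (hpos : ∀ z ∈ Ω, 0 < (J z).det)
    (A : EuclideanSpace ℝ (Fin 2) → Matrix (Fin 2) (Fin 2) ℝ)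
    (hsym : ∀ z ∈ Ω, (A z).IsSymm)
    (hagree : ∀ z ∈ Ω, J z * A z * (J z)ᵀ = (J z).det • (1 : Matrix (Fin 2) (Fin 2) ℝ))
    (r : ℝ) (hr : 2 ≤ r) (C : ℝ) (hC : 0 < C)
    (hSP : ∀ g : EuclideanSpace ℝ (Fin 2) → ℝ,
      ContDiff ℝ 1 g → HasCompactSupport g → tsupport g ⊆ Ω' →
      (∫ w in Ω', |g w| ^ r) ^ (1 / r) ≤
        C * (∫ w in Ω', ‖gradient g w‖ ^ 2) ^ ((1 : ℝ) / 2))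
    (f : EuclideanSpace ℝ (Fin 2) → ℝ)
    (hf : ContDiff ℝ 1 f) (hfc : HasCompactSupport f) (hfs : tsupport f ⊆ Ω) :
    (∫ z in Ω, |f z| ^ r * (J z).det) ^ (1 / r) ≤
      C * (∫ z in Ω, (inner ℝ (Matrix.toEuclideanCLM (𝕜 := ℝ) (A z) (gradient f z))
        (gradient f z) : ℝ)) ^ ((1 : ℝ) / 2) := by
  classical
  -- the transplanted function
  set g : EuclideanSpace ℝ (Fin 2) → ℝ := fun w => if w ∈ Ω' then f (ψ w) else 0 with hgdef
  have hφψ : ∀ w ∈ Ω', φ (ψ w) = w := by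
    intro w hw
    obtain ⟨z, hz, rfl⟩ := hbij.surjOn hw
    rw [hinv z hz]
  have hψmem : ∀ w ∈ Ω', ψ w ∈ Ω := by
    intro w hw
    obtain ⟨z, hz, rfl⟩ := hbij.surjOn hw
    rw [hinv z hz]; exact hz
  have hgΩ' : ∀ w ∈ Ω', g w = f (ψ w) := fun w hw => if_pos hw
  have hgφ : ∀ z ∈ Ω, g (φ z) = f z := by
    intro z hz
    rw [hgΩ' _ (hbij.mapsTo hz), hinv z hz]
  -- support facts
  have hKc : IsCompact (φ '' tsupport f) :=
    hfc.image_of_continuousOn (hφ.continuousOn.mono hfs)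
  have hKsub : φ '' tsupport f ⊆ Ω' := by
    rintro _ ⟨z, hz, rfl⟩; exact hbij.mapsTo (hfs hz)
  have hgsupp : Function.support g ⊆ φ '' tsupport f := by
    intro w hw
    simp only [Function.mem_support, hgdef] at hw
    by_cases hwΩ : w ∈ Ω'
    · rw [if_pos hwΩ] at hw
      have : ψ w ∈ tsupport f := subset_tsupport f hw
      exact ⟨ψ w, this, hφψ w hwΩ⟩
    · rw [if_neg hwΩ] at hw; exact absurd rfl hw
  have hgts : tsupport g ⊆ φ '' tsupport f :=
    closure_minimal hgsupp hKc.isClosed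
  have hgc : HasCompactSupport g := HasCompactSupport.of_support_subset_isCompact hKc hgsupp
  have hgs : tsupport g ⊆ Ω' := hgts.trans hKsub
  -- smoothness of g
  have hg : ContDiff ℝ 1 g := by
    rw [contDiff_iff_contDiffAt]
    intro w
    by_cases hwK : w ∈ φ '' tsupport f
    · have hw : w ∈ Ω' := hKsub hwK
      have h1 : ContDiffAt ℝ 1 (fun w => f (ψ w)) w :=
        (hf.contDiffAt).comp w (hψ.contDiffAt (hΩ'.mem_nhds hw))
      refine h1.congr_of_eventuallyEq ?_
      filter_upwards [hΩ'.mem_nhds hw] with x hx using hgΩ' x hx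
    · have hop : IsOpen (φ '' tsupport f)ᶜ := hKc.isClosed.isOpen_compl
      have : g =ᶠ[nhds w] (fun _ => 0) := by
        filter_upwards [hop.mem_nhds hwK] with x hx
        by_contra h
        exact hx (hgsupp h)
      exact (contDiffAt_const (c := (0:ℝ))).congr_of_eventuallyEq this
  -- gradient of g at φ z
  have hgrad : ∀ z ∈ Ω, gradient g (φ z) =
      Matrix.toEuclideanCLM (𝕜 := ℝ) ((J z)⁻¹ᵀ) (gradient f z) := by
    intro z hz
    have hw : φ z ∈ Ω' := hbij.mapsTo hz
    have hψdiff : DifferentiableAt ℝ ψ (φ z) :=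
      (hψ.contDiffAt (hΩ'.mem_nhds hw)).differentiableAt one_ne_zero
    set L := fderiv ℝ ψ (φ z) with hLdef
    have hψd : HasFDerivAt ψ L (φ z) := hψdiff.hasFDerivAt
    -- L = toEuclideanCLM (J z)⁻¹
    have hcomp : HasFDerivAt (ψ ∘ φ) (L.comp (Matrix.toEuclideanCLM (𝕜 := ℝ) (J z))) z :=
      hψd.comp z (hJ z hz)
    have hidn : HasFDerivAt (ψ ∘ φ) (ContinuousLinearMap.id ℝ (EuclideanSpace ℝ (Fin 2))) z := by
      have heq : (ψ ∘ φ) =ᶠ[nhds z] id := by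
        filter_upwards [hΩ.mem_nhds hz] with x hx using hinv x hx
      exact (hasFDerivAt_id z).congr_of_eventuallyEq heq
    have hL1 : L.comp (Matrix.toEuclideanCLM (𝕜 := ℝ) (J z)) =
        ContinuousLinearMap.id ℝ (EuclideanSpace ℝ (Fin 2)) := hcomp.unique hidn
    have hu : IsUnit (J z).det := (hpos z hz).ne'.isUnit
    have hL : L = Matrix.toEuclideanCLM (𝕜 := ℝ) ((J z)⁻¹) := by
      have h2 : Matrix.toEuclideanCLM (𝕜 := ℝ) (J z) *
          Matrix.toEuclideanCLM (𝕜 := ℝ) ((J z)⁻¹) = 1 := by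
        rw [← _root_.map_mul, Matrix.mul_nonsing_inv _ hu, _root_.map_one]
      calc L = L * (Matrix.toEuclideanCLM (𝕜 := ℝ) (J z) *
            Matrix.toEuclideanCLM (𝕜 := ℝ) ((J z)⁻¹)) := by rw [h2, mul_one]
        _ = (L * Matrix.toEuclideanCLM (𝕜 := ℝ) (J z)) *
            Matrix.toEuclideanCLM (𝕜 := ℝ) ((J z)⁻¹) := by rw [mul_assoc]
        _ = Matrix.toEuclideanCLM (𝕜 := ℝ) ((J z)⁻¹) := by
            have : L * Matrix.toEuclideanCLM (𝕜 := ℝ) (J z) = 1 := hL1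
            rw [this, one_mul]
    -- fderiv of g at φ z
    have hfd : HasFDerivAt f (fderiv ℝ f z) (ψ (φ z)) := by
      rw [hinv z hz]
      exact (hf.differentiable one_ne_zero z).hasFDerivAt
    have hcg : HasFDerivAt (fun w => f (ψ w)) ((fderiv ℝ f z).comp L) (φ z) :=
      hfd.comp (φ z) hψd
    have hgd : HasFDerivAt g ((fderiv ℝ f z).comp L) (φ z) := by
      refine hcg.congr_of_eventuallyEq ?_
      filter_upwards [hΩ'.mem_nhds hw] with x hx using hgΩ' x hx
    have hfg : fderiv ℝ g (φ z) = (fderiv ℝ f z).comp L := hgd.fderiv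
    apply ext_inner_right ℝ
    intro v
    rw [inner_gradient, hfg]
    have : ((fderiv ℝ f z).comp L) v = fderiv ℝ f z (L v) := rfl
    rw [this, ← inner_gradient f z (L v), hL]
    rw [inner_toECLM ((J z)⁻¹ᵀ) (gradient f z) v, Matrix.transpose_transpose]
  -- formula for A
  have hA : ∀ z ∈ Ω, A z = (J z).det • ((J z)⁻¹ * (J z)⁻¹ᵀ) := by
    intro z hz
    have hu : IsUnit (J z).det := (hpos z hz).ne'.isUnit
    have hut : IsUnit ((J z)ᵀ).det := by rwa [Matrix.det_transpose]
    have h1 : (J z)⁻¹ * (J z * A z * (J z)ᵀ) * ((J z)ᵀ)⁻¹ = A z := by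
      rw [← Matrix.mul_assoc, ← Matrix.mul_assoc, Matrix.nonsing_inv_mul _ hu, Matrix.one_mul,
        Matrix.mul_assoc, Matrix.mul_nonsing_inv _ hut, Matrix.mul_one]
    rw [← h1, hagree z hz, ← Matrix.transpose_nonsing_inv]
    rw [Matrix.mul_smul, Matrix.smul_mul, Matrix.mul_one]
  -- change of variables
  have hΩm : MeasurableSet Ω := hΩ.measurableSet
  have hcov : ∀ F : EuclideanSpace ℝ (Fin 2) → ℝ,
      ∫ w in Ω', F w = ∫ z in Ω, |(J z).det| • F (φ z) := by
    intro F
    rw [← hbij.image_eq]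
    rw [integral_image_eq_integral_abs_det_fderiv_smul volume hΩm
      (fun z hz => (hJ z hz).hasFDerivWithinAt) hbij.injOn F]
    refine setIntegral_congr_fun hΩm fun z hz => ?_
    rw [det_toECLM]
  have step1 : ∫ w in Ω', |g w| ^ r = ∫ z in Ω, |f z| ^ r * (J z).det := by
    rw [hcov]
    refine setIntegral_congr_fun hΩm fun z hz => ?_
    rw [hgφ z hz, smul_eq_mul, abs_of_pos (hpos z hz), mul_comm]
  have step2 : ∫ w in Ω', ‖gradient g w‖ ^ 2 =
      ∫ z in Ω, (inner ℝ (Matrix.toEuclideanCLM (𝕜 := ℝ) (A z) (gradient f z))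
        (gradient f z) : ℝ) := by
    rw [hcov]
    refine setIntegral_congr_fun hΩm fun z hz => ?_
    rw [hgrad z hz, smul_eq_mul]
    set u := gradient f z
    set B := (J z)⁻¹ᵀ with hB
    have h1 : ‖Matrix.toEuclideanCLM (𝕜 := ℝ) B u‖ ^ 2 =
        (inner ℝ (Matrix.toEuclideanCLM (𝕜 := ℝ) B u) (Matrix.toEuclideanCLM (𝕜 := ℝ) B u) : ℝ) :=
      (real_inner_self_eq_norm_sq _).symm
    rw [h1, inner_toECLM]
    have h2 : Matrix.toEuclideanCLM (𝕜 := ℝ) Bᵀ (Matrix.toEuclideanCLM (𝕜 := ℝ) B u) =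
        Matrix.toEuclideanCLM (𝕜 := ℝ) (Bᵀ * B) u := by
      rw [_root_.map_mul]; rfl
    rw [h2, hB, Matrix.transpose_transpose]
    have h3 : Matrix.toEuclideanCLM (𝕜 := ℝ) (A z) u =
        (J z).det • Matrix.toEuclideanCLM (𝕜 := ℝ) ((J z)⁻¹ * (J z)⁻¹ᵀ) u := by
      rw [hA z hz, _root_.map_smul]; rfl
    rw [h3, real_inner_smul_left, abs_of_pos (hpos z hz), real_inner_comm]
  rw [← step1, ← step2]
  exact hSP g hg hgc hgs
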